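/- Let (V,F) and (W,G) be nonzero filtered vector spaces, φ: V → W an isomorphism of vector spaces, and a ∈ ℝ such that φ(F_t V) ⊆ G_{t+a} W for all t ∈ ℝ. Then ν_W ≻ τ_a ν_V, i.e., for every bounded increasing function h on ℝ, ∫ h(x+a) ν_V(dx) ≤ ∫ h(x) ν_W(dx). -/

import Mathlib

open Module MeasureTheory Set
open scoped ENNReal

/-- Stochastic dominance: if a probability measure `μ` on `ℝ` gives all `Ici t`
at most the mass `ν` gives them, then integrals of bounded monotone functions
compare. -/
theorem aux_dominance (μ ν : Measure ℝ) (hμ : IsProbabilityMeasure μ)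
    (hν : IsProbabilityMeasure ν) (hIci : ∀ t : ℝ, μ (Ici t) ≤ ν (Ici t))
    (h : ℝ → ℝ) (hmono : Monotone h) (C : ℝ) (hbound : ∀ x, |h x| ≤ C) :
    (∫ x, h x ∂μ) ≤ ∫ x, h x ∂ν := by
  have hC : 0 ≤ C := (abs_nonneg _).trans (hbound 0)
  -- upper set comparison
  have upper : ∀ S : Set ℝ, IsUpperSet S → μ S ≤ ν S := by
    intro S hS
    rcases eq_empty_or_nonempty S with rfl | hne
    · simp
    by_cases hU : S = univ
    · subst hU; simp [hμ.measure_univ, hν.measure_univ]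
    obtain ⟨x, hx⟩ : ∃ x, x ∉ S := by
      by_contra hc
      push_neg at hc
      exact hU (eq_univ_of_forall hc)
    have hsub : S ⊆ Ioi x := by
      intro s hs
      by_contra hxs
      exact hx (hS (le_of_not_gt hxs) hs)
    have hbdd : BddBelow S := ⟨x, fun s hs => (hsub hs).le⟩
    set u := sInf S with hu
    have hSIci : S ⊆ Ici u := fun s hs => csInf_le hbdd hs
    have hIoiS : Ioi u ⊆ S := by
      intro z hz
      obtain ⟨s, hsS, hsz⟩ := exists_lt_of_csInf_lt hne hz
      exact hS hsz.le hsS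
    by_cases huS : u ∈ S
    · have : S = Ici u := by
        apply Subset.antisymm hSIci
        intro z hz
        rcases eq_or_lt_of_le (mem_Ici.mp hz) with rfl | hlt
        · exact huS
        · exact hIoiS hlt
      rw [this]; exact hIci u
    · have hSeq : S = Ioi u := by
        apply Subset.antisymm _ hIoiS
        intro z hz
        rcases eq_or_lt_of_le (mem_Ici.mp (hSIci hz)) with rfl | hlt
        · exact absurd hz huS
        · exact hlt
      have hunion : Ioi u = ⋃ n : ℕ, Ici (u + 1 / (n + 1)) := by
        ext z
        simp only [mem_Ioi, mem_iUnion, mem_Ici]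
        constructor
        · intro hz
          obtain ⟨n, hn⟩ := exists_nat_one_div_lt (show (0:ℝ) < z - u by linarith)
          exact ⟨n, by push_cast at hn ⊢; linarith⟩
        · rintro ⟨n, hn⟩
          have : (0:ℝ) < 1 / ((n:ℝ) + 1) := by positivity
          linarith
      have hmonot : Monotone (fun n : ℕ => Ici (u + 1 / ((n:ℝ) + 1))) := by
        intro n m hnm z hz
        have h1 : (1:ℝ) / ((m:ℝ) + 1) ≤ 1 / ((n:ℝ) + 1) := by
          apply one_div_le_one_div_of_le (by positivity)
          exact_mod_cast by omega
        simp only [mem_Ici] at hz ⊢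
        linarith
      rw [hSeq, hunion, hmonot.directed_le.measure_iUnion]
      apply iSup_le
      intro n
      refine (hIci _).trans (measure_mono ?_)
      rw [← hunion]
      intro z hz
      have : (0:ℝ) < 1 / ((n:ℝ) + 1) := by positivity
      simp only [mem_Ici] at hz
      exact mem_Ioi.mpr (by linarith)
  -- measurability and integrability
  have hmeas : Measurable h := hmono.measurable
  have hint : ∀ (ρ : Measure ℝ), IsProbabilityMeasure ρ → Integrable h ρ := by
    intro ρ hρ
    refine (integrable_const C).mono' hmeas.aestronglyMeasurable ?_
    filter_upwards with x
    simpa using hbound x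
  set g : ℝ → ℝ := fun x => h x + C with hg
  have hg_nn : ∀ x, 0 ≤ g x := fun x => by
    have := (abs_le.mp (hbound x)).1; simp [hg]; linarith
  have hg_meas : Measurable g := hmeas.add_const C
  have hg_mono : Monotone g := fun x y hxy => by
    simp only [hg]; linarith [hmono hxy]
  -- layer cake for both measures
  have lc : ∀ (ρ : Measure ℝ), IsProbabilityMeasure ρ →
      ∫ x, g x ∂ρ = (∫⁻ t in Ioi (0:ℝ), ρ {a | t ≤ g a}).toReal := by
    intro ρ hρ
    rw [integral_eq_lintegral_of_nonneg_ae (Filter.Eventually.of_forall hg_nn)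
      hg_meas.aestronglyMeasurable, lintegral_eq_lintegral_meas_le ρ
      (Filter.Eventually.of_forall hg_nn) hg_meas.aemeasurable]
  have hcomp : (∫⁻ t in Ioi (0:ℝ), μ {a | t ≤ g a}) ≤
      ∫⁻ t in Ioi (0:ℝ), ν {a | t ≤ g a} := by
    apply lintegral_mono
    intro t
    exact upper _ (fun x y hxy hx => le_trans hx (hg_mono hxy))
  have hfin : (∫⁻ t in Ioi (0:ℝ), ν {a | t ≤ g a}) ≠ ⊤ := by
    have hb : (∫⁻ t in Ioi (0:ℝ), ν {a | t ≤ g a}) ≤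
        ∫⁻ t in Ioi (0:ℝ), (Iic (2*C)).indicator (fun _ => (1:ℝ≥0∞)) t := by
      apply lintegral_mono
      intro t
      by_cases ht : t ≤ 2*C
      · simpa [indicator, ht] using prob_le_one (μ := ν) (s := {a | t ≤ g a})
      · push_neg at ht
        have hempty : {a : ℝ | t ≤ g a} = ∅ := by
          ext x
          simp only [mem_setOf_eq, mem_empty_iff_false, iff_false, not_le]
          have := (abs_le.mp (hbound x)).2
          simp only [hg]
          linarith
        simp [hempty, indicator, not_le.mpr ht]
    refine ne_top_of_le_ne_top ?_ hb
    rw [lintegral_indicator measurableSet_Iic _]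
    simp only [lintegral_one, Measure.restrict_restrict measurableSet_Iic,
      Measure.restrict_apply_univ]
    have hset : Iic (2*C) ∩ Ioi (0:ℝ) = Ioc 0 (2*C) := by
      ext x; simp [mem_Ioc, mem_Ioi, mem_Iic, and_comm]
    rw [hset, Real.volume_Ioc]
    exact ENNReal.ofReal_ne_top
  have hgle : ∫ x, g x ∂μ ≤ ∫ x, g x ∂ν := by
    rw [lc μ hμ, lc ν hν]
    exact ENNReal.toReal_mono hfin hcomp
  have e1 : ∫ x, g x ∂μ = (∫ x, h x ∂μ) + C := by
    rw [integral_add (hint μ hμ) (integrable_const C), integral_const,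
      probReal_univ]; simp
  have e2 : ∫ x, g x ∂ν = (∫ x, h x ∂ν) + C := by
    rw [integral_add (hint ν hν) (integrable_const C), integral_const,
      probReal_univ]; simp
  rw [e1, e2] at hgle
  linarith

/-- Let `(V, F)` and `(W, G)` be nonzero filtered vector
spaces, `φ : V ≃ W` a linear isomorphism and `a ∈ ℝ` with
`φ(F_t V) ⊆ G_{t+a} W` for all `t`. Then `ν_W ≻ τ_a ν_V`, i.e. for every
bounded increasing function `h` on `ℝ`,
`∫ h(x + a) ν_V(dx) ≤ ∫ h(x) ν_W(dx)`. -/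
theorem stmt2 {K V W : Type*} [Field K]
    [AddCommGroup V] [Module K V] [FiniteDimensional K V] [Nontrivial V]
    [AddCommGroup W] [Module K W] [FiniteDimensional K W] [Nontrivial W]
    (F : ℝ → Submodule K V) (G : ℝ → Submodule K W)
    (hF_anti : Antitone F)
    (hF_bot : ∃ t₀ : ℝ, ∀ t ≥ t₀, F t = ⊥)
    (hF_top : ∃ t₁ : ℝ, ∀ t ≤ t₁, F t = ⊤)
    (hF_leftcont : ∀ t : ℝ, F t = ⨅ (s : ℝ) (_ : s < t), F s)
    (hG_anti : Antitone G)
    (hG_bot : ∃ t₀ : ℝ, ∀ t ≥ t₀, G t = ⊥)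
    (hG_top : ∃ t₁ : ℝ, ∀ t ≤ t₁, G t = ⊤)
    (hG_leftcont : ∀ t : ℝ, G t = ⨅ (s : ℝ) (_ : s < t), G s)
    (φ : V ≃ₗ[K] W) (a : ℝ)
    (hcomp : ∀ t : ℝ, (F t).map (φ : V →ₗ[K] W) ≤ G (t + a))
    (νV νW : Measure ℝ)
    (hνV : IsProbabilityMeasure νV)
    (hνVchar : ∀ t : ℝ, (νV (Ici t)).toReal = (finrank K (F t) : ℝ) / finrank K V)
    (hνW : IsProbabilityMeasure νW)
    (hνWchar : ∀ t : ℝ, (νW (Ici t)).toReal = (finrank K (G t) : ℝ) / finrank K W)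
    (h : ℝ → ℝ) (hmono : Monotone h) (C : ℝ) (hbound : ∀ x, |h x| ≤ C) :
    (∫ x, h (x + a) ∂νV) ≤ ∫ x, h x ∂νW := by
  have hdim : finrank K V = finrank K W := φ.finrank_eq
  have hWpos : 0 < finrank K W := Module.finrank_pos
  have hrank : ∀ t : ℝ, finrank K (F t) ≤ finrank K (G (t + a)) := by
    intro t
    calc finrank K (F t) = finrank K ((F t).map (φ : V →ₗ[K] W)) :=
          (LinearEquiv.finrank_map_eq φ (F t)).symm
      _ ≤ finrank K (G (t + a)) := Submodule.finrank_mono (hcomp t)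
  set μ' : Measure ℝ := νV.map (fun x => x + a) with hμ'
  haveI hμ'prob : IsProbabilityMeasure μ' :=
    Measure.isProbabilityMeasure_map (measurable_add_const a).aemeasurable
  have hIci : ∀ t : ℝ, μ' (Ici t) ≤ νW (Ici t) := by
    intro t
    have hmap : μ' (Ici t) = νV (Ici (t - a)) := by
      rw [hμ', Measure.map_apply (measurable_add_const a) measurableSet_Ici,
        preimage_add_const_Ici]
    rw [hmap]
    rw [← ENNReal.toReal_le_toReal (measure_ne_top _ _) (measure_ne_top _ _)]
    rw [hνVchar, hνWchar, hdim]
    have := hrank (t - a)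
    rw [sub_add_cancel] at this
    gcongr
  have heq : (∫ x, h (x + a) ∂νV) = ∫ x, h x ∂μ' := by
    rw [hμ', integral_map (measurable_add_const a).aemeasurable
      hmono.measurable.aestronglyMeasurable]
  rw [heq]
  exact aux_dominance μ' νW hμ'prob hνW hIci h hmono C hbound
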